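/- (Theorem 4.1, first part) There exists a training set for linear regression with missing entries that has more than one minimal imputation set. Concretely, there exist n, d, a feature matrix X ∈ ℝ^{n×d} with a nonempty set of missing entries (each missing entry ranging over a prescribed set of reals), and a label vector y ∈ ℝⁿ, such that two distinct sets S₁ ≠ S₂ of incomplete features are both minimal imputation sets for linear regression over (X, y). -/
import Mathlib


/-- Squared-error linear regression loss `‖Xw − y‖₂²`. -/
def lrLoss {n d : ℕ} (X : Fin n → Fin d → ℝ) (y : Fin n → ℝ) (w : Fin d → ℝ) : ℝ :=
  ∑ i, ((∑ j, X i j * w j) - y i) ^ 2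

/-- `Xr` is a repair of `X` w.r.t. the missing-entry set `M`: it agrees with `X` on
non-missing entries and assigns each missing entry `(i,j)` a value from its
prescribed set `D i j`. -/
def IsRepairLR {n d : ℕ} (M : Set (Fin n × Fin d)) (D : Fin n → Fin d → Set ℝ)
    (X Xr : Fin n → Fin d → ℝ) : Prop :=
  (∀ i j, (i, j) ∉ M → Xr i j = X i j) ∧
  (∀ i j, (i, j) ∈ M → Xr i j ∈ D i j)

/-- Feature (column) `j` is incomplete if it contains a missing entry. -/
def IncompleteFeature {n d : ℕ} (M : Set (Fin n × Fin d)) (j : Fin d) : Prop :=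
  ∃ i, (i, j) ∈ M

/-- A certain model: `w` minimizes `‖Xʳw − y‖₂²` for every repair `Xʳ` of `X`. -/
def CertainModelLR {n d : ℕ} (M : Set (Fin n × Fin d)) (D : Fin n → Fin d → Set ℝ)
    (X : Fin n → Fin d → ℝ) (y : Fin n → ℝ) (w : Fin d → ℝ) : Prop :=
  ∀ Xr, IsRepairLR M D X Xr → ∀ w', lrLoss Xr y w ≤ lrLoss Xr y w'

/-- A set `S` of features is imputation-sufficient if for every assignment of values
(from the prescribed sets) to the missing entries lying in features of `S`, the
resulting data (remaining missing entries `{p ∈ M | p.2 ∉ S}`) admits a certain model. -/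
def ImputationSufficientLR {n d : ℕ} (M : Set (Fin n × Fin d)) (D : Fin n → Fin d → Set ℝ)
    (X : Fin n → Fin d → ℝ) (y : Fin n → ℝ) (S : Finset (Fin d)) : Prop :=
  ∀ ρ : Fin n → Fin d → ℝ,
    (∀ i j, (i, j) ∈ M → j ∈ S → ρ i j ∈ D i j) →
    (∀ i j, ¬((i, j) ∈ M ∧ j ∈ S) → ρ i j = X i j) →
    ∃ w, CertainModelLR {p ∈ M | p.2 ∉ S} D ρ y w

/-- A minimal imputation set: an imputation-sufficient set of incomplete features
of minimum cardinality. -/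
def MinimalImputationSetLR {n d : ℕ} (M : Set (Fin n × Fin d)) (D : Fin n → Fin d → Set ℝ)
    (X : Fin n → Fin d → ℝ) (y : Fin n → ℝ) (S : Finset (Fin d)) : Prop :=
  (∀ j ∈ S, IncompleteFeature M j) ∧
  ImputationSufficientLR M D X y S ∧
  ∀ S' : Finset (Fin d), (∀ j ∈ S', IncompleteFeature M j) →
    ImputationSufficientLR M D X y S' → S.card ≤ S'.card

/-- Loss formula in the 1×2 case. -/
lemma lrLoss_eq12 (X : Fin 1 → Fin 2 → ℝ) (y : Fin 1 → ℝ) (w : Fin 2 → ℝ) :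
    lrLoss X y w = (X 0 0 * w 0 + X 0 1 * w 1 - y 0) ^ 2 := by
  simp [lrLoss, Fin.sum_univ_one, Fin.sum_univ_two]

lemma key_min (a t w0' w1' : ℝ) (ha : a = 0 ∨ a = 1) (ht : t = 0 ∨ t = 1) :
    (a * a + t * (1 - a) - 1) ^ 2 ≤ (a * w0' + t * w1' - 1) ^ 2 := by
  rcases ha with h | h <;> rcases ht with h' | h' <;> subst h <;> subst h' <;>
    norm_num <;> positivity

lemma key_min' (a t w0' w1' : ℝ) (ha : a = 0 ∨ a = 1) (ht : t = 0 ∨ t = 1) :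
    (t * (1 - a) + a * a - 1) ^ 2 ≤ (t * w0' + a * w1' - 1) ^ 2 := by
  rcases ha with h | h <;> rcases ht with h' | h' <;> subst h <;> subst h' <;>
    norm_num <;> positivity

/-- No certain model exists when both entries are missing with domain `{0,1}`. -/
lemma no_certain_model (w : Fin 2 → ℝ)
    (hw : CertainModelLR {p ∈ (Set.univ : Set (Fin 1 × Fin 2)) | p.2 ∉ (∅ : Finset (Fin 2))}
      (fun _ _ => ({0, 1} : Set ℝ)) (fun _ _ => (0 : ℝ)) (fun _ => 1) w) : False := by
  have repair : ∀ a b : ℝ, a = 0 ∨ a = 1 → b = 0 ∨ b = 1 →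
      IsRepairLR {p ∈ (Set.univ : Set (Fin 1 × Fin 2)) | p.2 ∉ (∅ : Finset (Fin 2))}
        (fun _ _ => ({0, 1} : Set ℝ)) (fun _ _ => (0 : ℝ))
        (fun _ j => if j = 0 then a else b) := by
    intro a b ha hb
    constructor
    · intro i j hij
      exact absurd (by simp) hij
    · intro i j _
      by_cases h : j = 0 <;> simp [h] <;> tauto
  have h10 := hw _ (repair 1 0 (Or.inr rfl) (Or.inl rfl)) ![1, 0]
  rw [lrLoss_eq12, lrLoss_eq12] at h10
  norm_num at h10
  have hw0 : w 0 = 1 := by nlinarith [sq_nonneg (w 0 - 1)]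
  have h01 := hw _ (repair 0 1 (Or.inl rfl) (Or.inr rfl)) ![0, 1]
  rw [lrLoss_eq12, lrLoss_eq12] at h01
  norm_num at h01
  have hw1 : w 1 = 1 := by nlinarith [sq_nonneg (w 1 - 1)]
  have h11 := hw _ (repair 1 1 (Or.inr rfl) (Or.inr rfl)) ![1, 0]
  rw [lrLoss_eq12, lrLoss_eq12] at h11
  norm_num [hw0, hw1] at h11

/-- Any imputation-sufficient set for the example has at least one element. -/
lemma one_le_card (S' : Finset (Fin 2))
    (hsuff : ImputationSufficientLR (Set.univ : Set (Fin 1 × Fin 2))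
      (fun _ _ => ({0, 1} : Set ℝ)) (fun _ _ => (0 : ℝ)) (fun _ => 1) S') :
    1 ≤ S'.card := by
  by_contra h
  push_neg at h
  have hS' : S' = ∅ := Finset.card_eq_zero.mp (by omega)
  subst hS'
  obtain ⟨w, hw⟩ := hsuff (fun _ _ => 0) (fun i j _ hj => absurd hj (by simp))
    (fun _ _ _ => rfl)
  exact no_certain_model w hw

/-- `{0}` is imputation-sufficient for the example. -/
lemma suff0 : ImputationSufficientLR (Set.univ : Set (Fin 1 × Fin 2))
    (fun _ _ => ({0, 1} : Set ℝ)) (fun _ _ => (0 : ℝ)) (fun _ => 1) {0} := by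
  intro ρ h1 h2
  have ha : ρ 0 0 = 0 ∨ ρ 0 0 = 1 := by simpa using h1 0 0 trivial (by simp)
  refine ⟨![ρ 0 0, 1 - ρ 0 0], ?_⟩
  intro Xr hXr w'
  have hx0 : Xr 0 0 = ρ 0 0 := hXr.1 0 0 (by simp)
  have hx1 : Xr 0 1 = 0 ∨ Xr 0 1 = 1 := by simpa using hXr.2 0 1 (by simp)
  rw [lrLoss_eq12, lrLoss_eq12]
  simp only [Matrix.cons_val_zero, Matrix.cons_val_one, Matrix.head_cons]
  rw [hx0]
  exact key_min _ _ _ _ ha hx1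

/-- `{1}` is imputation-sufficient for the example. -/
lemma suff1 : ImputationSufficientLR (Set.univ : Set (Fin 1 × Fin 2))
    (fun _ _ => ({0, 1} : Set ℝ)) (fun _ _ => (0 : ℝ)) (fun _ => 1) {1} := by
  intro ρ h1 h2
  have ha : ρ 0 1 = 0 ∨ ρ 0 1 = 1 := by simpa using h1 0 1 trivial (by simp)
  refine ⟨![1 - ρ 0 1, ρ 0 1], ?_⟩
  intro Xr hXr w'
  have hx1 : Xr 0 1 = ρ 0 1 := hXr.1 0 1 (by simp)
  have hx0 : Xr 0 0 = 0 ∨ Xr 0 0 = 1 := by simpa using hXr.2 0 0 (by simp)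
  rw [lrLoss_eq12, lrLoss_eq12]
  simp only [Matrix.cons_val_zero, Matrix.cons_val_one, Matrix.head_cons]
  rw [hx1]
  exact key_min' _ _ _ _ ha hx0

/-- Theorem 4.1 (first part): there exists a linear-regression training set with a
nonempty set of missing entries that has two distinct minimal imputation sets. -/
theorem exists_training_set_with_two_minimal_imputation_sets :
    ∃ (n d : ℕ) (X : Fin n → Fin d → ℝ) (M : Set (Fin n × Fin d))
      (D : Fin n → Fin d → Set ℝ) (y : Fin n → ℝ) (S₁ S₂ : Finset (Fin d)),
      M.Nonempty ∧
      (∀ p ∈ M, (D p.1 p.2).Nonempty) ∧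
      S₁ ≠ S₂ ∧
      MinimalImputationSetLR M D X y S₁ ∧
      MinimalImputationSetLR M D X y S₂ := by
  refine ⟨1, 2, fun _ _ => 0, Set.univ, fun _ _ => ({0, 1} : Set ℝ), fun _ => 1,
    {0}, {1}, ⟨(0, 0), trivial⟩, fun p _ => ⟨0, by simp⟩, by decide,
    ⟨fun j _ => ⟨0, trivial⟩, suff0, ?_⟩, ⟨fun j _ => ⟨0, trivial⟩, suff1, ?_⟩⟩ <;>
  · intro S' _ hsuff
    simpa using one_le_card S' hsuff
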